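/- Let p ≥ 5 be prime, f_k(x) = x^2 - 2(k+1)x + (k-1)^2, and ε_k = ∑_{x=0}^{p-1} (f_1(x) f_k(x) / p). Then ∑_{k=1}^{p-1} ε_k = 2 + (p/3). -/

import Mathlib

open Finset

section Aux

variable {p : ℕ} [Fact p.Prime]


-- Lemma A: sum of chi(x(x-d)) = -1 for d ≠ 0
lemma sumA (hp2 : p ≠ 2) {d : ZMod p} (hd : d ≠ 0) :
    ∑ x : ZMod p, (quadraticChar (ZMod p) (x * (x - d)) : ℤ) = -1 := by
  classical
  have hc : ringChar (ZMod p) ≠ 2 := (ZMod.ringChar_zmod_n p).substr hp2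
  rw [← Finset.sum_erase (f := fun x : ZMod p => (quadraticChar (ZMod p) (x * (x - d)) : ℤ))
    (univ : Finset (ZMod p)) (a := 0) (by simp)]
  have key : ∑ x ∈ (univ : Finset (ZMod p)).erase 0,
      (quadraticChar (ZMod p) (x * (x - d)) : ℤ)
      = ∑ z ∈ (univ : Finset (ZMod p)).erase 1, (quadraticChar (ZMod p) z : ℤ) := by
    apply Finset.sum_nbij' (i := fun x => 1 - d * x⁻¹) (j := fun z => d * (1 - z)⁻¹)
    · intro x hx
      have hx0 : x ≠ 0 := by simpa using hx
      simp only [mem_erase, mem_univ, and_true]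
      intro h
      have : d * x⁻¹ = 0 := by linear_combination -h
      rcases mul_eq_zero.mp this with h' | h'
      · exact hd h'
      · exact hx0 (inv_eq_zero.mp h')
    · intro z hz
      have hz1 : z ≠ 1 := by simpa using hz
      simp only [mem_erase, mem_univ, and_true]
      intro h
      rcases mul_eq_zero.mp h with h' | h'
      · exact hd h'
      · exact hz1 (by have := inv_eq_zero.mp h'; linear_combination -this)
    · intro x hx
      have hx0 : x ≠ 0 := by simpa using hx
      have h1 : 1 - (1 - d * x⁻¹) = d * x⁻¹ := by ring
      field_simp [h1]
      rw [sub_sub_cancel, div_self hd]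
    · intro z hz
      have hz1 : z ≠ 1 := by simpa using hz
      have h1 : (1 : ZMod p) - z ≠ 0 := sub_ne_zero.mpr (Ne.symm hz1)
      field_simp
      ring
    · intro x hx
      have hx0 : x ≠ 0 := by simpa using hx
      have hfact : x * (x - d) = x ^ 2 * (1 - d * x⁻¹) := by
        field_simp
      rw [hfact, map_mul, quadraticChar_sq_one' hx0, one_mul]
  rw [key, Finset.sum_erase_eq_sub (mem_univ 1), quadraticChar_sum_zero hc, map_one]
  norm_num

-- Lemma B: sum of chi(x^2 - d) = -1 for d ≠ 0
lemma sumB (hp2 : p ≠ 2) {d : ZMod p} (hd : d ≠ 0) :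
    ∑ x : ZMod p, (quadraticChar (ZMod p) (x ^ 2 - d) : ℤ) = -1 := by
  classical
  have hc : ringChar (ZMod p) ≠ 2 := (ZMod.ringChar_zmod_n p).substr hp2
  have step1 : ∑ x : ZMod p, (quadraticChar (ZMod p) (x ^ 2 - d) : ℤ)
      = ∑ t : ZMod p, (quadraticChar (ZMod p) t + 1) * quadraticChar (ZMod p) (t - d) := by
    rw [← Finset.sum_fiberwise_of_maps_to' (g := fun x : ZMod p => x ^ 2)
      (fun i _ => mem_univ _) (fun t => (quadraticChar (ZMod p) (t - d) : ℤ))]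
    refine Finset.sum_congr rfl fun t _ => ?_
    rw [Finset.sum_const, ← quadraticChar_card_sqrts hc t]
    rw [Set.toFinset_setOf]
    simp [mul_comm]
  rw [step1]
  have expand : ∀ t : ZMod p,
      (quadraticChar (ZMod p) t + 1) * quadraticChar (ZMod p) (t - d)
      = quadraticChar (ZMod p) (t * (t - d)) + quadraticChar (ZMod p) (t - d) := by
    intro t
    rw [map_mul]; ring
  rw [Finset.sum_congr rfl fun t _ => expand t, Finset.sum_add_distrib]
  have h2 : ∑ t : ZMod p, (quadraticChar (ZMod p) (t - d) : ℤ) = 0 := by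
    rw [show ∑ t : ZMod p, (quadraticChar (ZMod p) (t - d) : ℤ)
        = ∑ t : ZMod p, (quadraticChar (ZMod p) t : ℤ) from
      Fintype.sum_equiv (Equiv.subRight d) _ _ (fun t => rfl)]
    exact quadraticChar_sum_zero hc
  rw [sumA hp2 hd, h2]
  norm_num

/-- `eps` rewritten as a sum over `ZMod p`. -/
lemma eps_eq (k : ℤ) :
    (∑ x ∈ Finset.range p,
      legendreSym p (((x : ℤ) ^ 2 - 4 * x) *
        ((x : ℤ) ^ 2 - 2 * (k + 1) * x + (k - 1) ^ 2)))
    = ∑ z : ZMod p, (quadraticChar (ZMod p)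
        ((z ^ 2 - 4 * z) * (z ^ 2 - 2 * ((k : ZMod p) + 1) * z + ((k : ZMod p) - 1) ^ 2)) : ℤ) := by
  classical
  refine Finset.sum_nbij' (fun x => ((x : ZMod p))) (fun z => z.val) ?_ ?_ ?_ ?_ ?_
  · intro x _; exact mem_univ _
  · intro z _
    simpa using ZMod.val_lt z
  · intro x hx
    exact ZMod.val_cast_of_lt (Finset.mem_range.mp hx)
  · intro z _
    exact ZMod.natCast_rightInverse z
  · intro x _
    rw [legendreSym]
    congr 1
    push_cast
    ring

private def Efun (p : ℕ) [Fact p.Prime] (κ : ZMod p) : ℤ :=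
  ∑ z : ZMod p, quadraticChar (ZMod p)
    ((z ^ 2 - 4 * z) * (z ^ 2 - 2 * (κ + 1) * z + (κ - 1) ^ 2))

lemma E_total (hp2 : p ≠ 2) (h4 : (4 : ZMod p) ≠ 0) : ∑ κ : ZMod p, Efun p κ = 1 := by
  classical
  unfold Efun
  rw [Finset.sum_comm]
  have inner : ∀ z : ZMod p, z ≠ 0 →
      ∑ κ : ZMod p, (quadraticChar (ZMod p)
        ((z ^ 2 - 4 * z) * (z ^ 2 - 2 * (κ + 1) * z + (κ - 1) ^ 2)) : ℤ)
      = - quadraticChar (ZMod p) (z ^ 2 - 4 * z) := by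
    intro z hz
    have hmul : ∀ κ : ZMod p, (quadraticChar (ZMod p)
        ((z ^ 2 - 4 * z) * (z ^ 2 - 2 * (κ + 1) * z + (κ - 1) ^ 2)) : ℤ)
        = quadraticChar (ZMod p) (z ^ 2 - 4 * z)
          * quadraticChar (ZMod p) (z ^ 2 - 2 * (κ + 1) * z + (κ - 1) ^ 2) :=
      fun κ => map_mul _ _ _
    rw [Finset.sum_congr rfl fun κ _ => hmul κ, ← Finset.mul_sum]
    have hsub : ∑ κ : ZMod p, (quadraticChar (ZMod p)
          (z ^ 2 - 2 * (κ + 1) * z + (κ - 1) ^ 2) : ℤ)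
        = ∑ j : ZMod p, (quadraticChar (ZMod p) (j ^ 2 - 4 * z) : ℤ) := by
      refine Fintype.sum_equiv (Equiv.subRight (z + 1)) _ _ fun κ => ?_
      simp only [Equiv.subRight_apply]
      congr 1
      ring
    rw [hsub, sumB hp2 (mul_ne_zero h4 hz)]
    ring
  rw [← Finset.sum_erase (f := fun z : ZMod p => ∑ κ : ZMod p, (quadraticChar (ZMod p)
      ((z ^ 2 - 4 * z) * (z ^ 2 - 2 * (κ + 1) * z + (κ - 1) ^ 2)) : ℤ))
    (univ : Finset (ZMod p)) (a := 0) (by simp)]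
  have step : ∑ z ∈ (univ : Finset (ZMod p)).erase 0, ∑ κ : ZMod p, (quadraticChar (ZMod p)
      ((z ^ 2 - 4 * z) * (z ^ 2 - 2 * (κ + 1) * z + (κ - 1) ^ 2)) : ℤ)
      = ∑ z ∈ (univ : Finset (ZMod p)).erase 0, -(quadraticChar (ZMod p) (z * (z - 4)) : ℤ) := by
    refine Finset.sum_congr rfl fun z hz => ?_
    have hz0 : z ≠ 0 := by simpa using hz
    rw [inner z hz0]
    have : z ^ 2 - 4 * z = z * (z - 4) := by ring
    rw [this]
  rw [step, Finset.sum_neg_distrib,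
    Finset.sum_erase (f := fun z : ZMod p => (quadraticChar (ZMod p) (z * (z - 4)) : ℤ))
      (univ : Finset (ZMod p)) (a := 0) (by simp),
    sumA hp2 h4]
  norm_num

lemma E_zero (hp2 : p ≠ 2) (h4 : (4 : ZMod p) ≠ 0) :
    Efun p 0 = -1 - quadraticChar (ZMod p) (-3) := by
  classical
  unfold Efun
  have key : ∀ z : ZMod p, (quadraticChar (ZMod p)
      ((z ^ 2 - 4 * z) * (z ^ 2 - 2 * ((0 : ZMod p) + 1) * z + ((0 : ZMod p) - 1) ^ 2)) : ℤ)
      = quadraticChar (ZMod p) (z * (z - 4)) * quadraticChar (ZMod p) ((z - 1) ^ 2) := by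
    intro z
    rw [← map_mul]
    congr 1
    ring
  rw [Finset.sum_congr rfl fun z _ => key z]
  rw [← Finset.sum_erase (f := fun z : ZMod p => (quadraticChar (ZMod p) (z * (z - 4)) : ℤ)
      * quadraticChar (ZMod p) ((z - 1) ^ 2))
    (univ : Finset (ZMod p)) (a := 1) (by simp)]
  have step : ∀ z ∈ (univ : Finset (ZMod p)).erase 1,
      (quadraticChar (ZMod p) (z * (z - 4)) : ℤ) * quadraticChar (ZMod p) ((z - 1) ^ 2)
      = quadraticChar (ZMod p) (z * (z - 4)) := by
    intro z hz
    have hz1 : z - 1 ≠ 0 := sub_ne_zero.mpr (by simpa using hz)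
    rw [quadraticChar_sq_one' hz1, mul_one]
  rw [Finset.sum_congr rfl step, Finset.sum_erase_eq_sub (mem_univ 1), sumA hp2 h4]
  have : (1 : ZMod p) * (1 - 4) = -3 := by ring
  rw [this]

lemma leg_neg_three (hp2 : p ≠ 2) (_hp3 : p ≠ 3) :
    (quadraticChar (ZMod p) (-3 : ZMod p) : ℤ) = legendreSym 3 p := by
  haveI : Fact (Nat.Prime 3) := ⟨by norm_num⟩
  have hp' : p.Prime := Fact.out
  have h1 : legendreSym p (-3) = (quadraticChar (ZMod p) (-3 : ZMod p) : ℤ) := by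
    rw [legendreSym]
    norm_num
  have h2 : legendreSym p (-3) = legendreSym p (-1) * legendreSym p 3 := by
    rw [← legendreSym.mul]
    norm_num
  have hodd : p % 2 = 1 := hp'.eq_two_or_odd.resolve_left hp2
  have h3 : legendreSym p (-1) = (-1 : ℤ) ^ (p / 2) := by
    rw [legendreSym.at_neg_one hp2, ZMod.χ₄_eq_neg_one_pow hodd]
  have h4 : legendreSym 3 p = (-1 : ℤ) ^ (p / 2) * legendreSym p 3 := by
    have := legendreSym.quadratic_reciprocity' (p := p) (q := 3) hp2 (by norm_num)
    simpa using this
  rw [← h1, h2, h3, h4]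

end Aux

/-- `ε_k = ∑_{x=0}^{p-1} (f_1(x) f_k(x) / p)` with
`f_k(x) = x² - 2(k+1)x + (k-1)²`. -/
def eps (p : ℕ) [Fact p.Prime] (k : ℤ) : ℤ :=
  ∑ x ∈ Finset.range p,
    legendreSym p (((x : ℤ) ^ 2 - 4 * x) *
      ((x : ℤ) ^ 2 - 2 * (k + 1) * x + (k - 1) ^ 2))

theorem epsilon_sum_full (p : ℕ) [Fact p.Prime] (hp : 5 ≤ p) :
    ∑ k ∈ Finset.Icc (1 : ℤ) ((p : ℤ) - 1), eps p k = 2 + legendreSym 3 p := by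
  classical
  have hp2 : p ≠ 2 := by omega
  have hp3 : p ≠ 3 := by omega
  have h4 : (4 : ZMod p) ≠ 0 := by
    have h : ¬ ((4 : ℕ) : ZMod p) = 0 := by
      rw [ZMod.natCast_eq_zero_iff]
      intro h
      exact absurd (Nat.le_of_dvd (by norm_num) h) (by omega)
    simpa using h
  have heps : ∀ k : ℤ, eps p k = Efun p (k : ZMod p) := fun k => by
    rw [eps]; exact eps_eq k
  have hfull : ∑ k ∈ Finset.Icc (0 : ℤ) ((p : ℤ) - 1), eps p k = ∑ κ : ZMod p, Efun p κ := by
    refine Finset.sum_nbij' (fun k => ((k : ZMod p))) (fun κ => (κ.val : ℤ)) ?_ ?_ ?_ ?_ ?_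
    · intro k _; exact mem_univ _
    · intro κ _
      have := ZMod.val_lt κ
      simp only [Finset.mem_Icc]
      omega
    · intro k hk
      simp only [Finset.mem_Icc] at hk
      show ((k : ZMod p).val : ℤ) = k
      rw [ZMod.val_intCast]
      exact Int.emod_eq_of_lt hk.1 (by omega)
    · intro κ _
      show (((κ.val : ℤ) : ZMod p)) = κ
      push_cast
      exact ZMod.natCast_rightInverse κ
    · intro k _
      exact heps k
  have hIcc : Finset.Icc (0 : ℤ) ((p : ℤ) - 1) = insert 0 (Finset.Icc 1 ((p : ℤ) - 1)) := by
    ext x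
    simp only [Finset.mem_Icc, Finset.mem_insert]
    omega
  have hsplit : ∑ k ∈ Finset.Icc (0 : ℤ) ((p : ℤ) - 1), eps p k
      = eps p 0 + ∑ k ∈ Finset.Icc (1 : ℤ) ((p : ℤ) - 1), eps p k := by
    rw [hIcc, Finset.sum_insert (by simp)]
  have h0 : eps p 0 = -1 - quadraticChar (ZMod p) (-3) := by
    rw [heps 0, Int.cast_zero, E_zero hp2 h4]
  have htot := E_total (p := p) hp2 h4
  rw [hfull, htot, h0] at hsplit
  rw [← leg_neg_three hp2 hp3]
  linarith
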